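/- Let F be a finite set, φ : F^ℕ → ℝ continuous, (β_i) a sequence of positive reals with β_i → +∞, and for each i let μ_i be an equilibrium state for β_iφ. If μ_i → μ in the weak-* topology, then μ is a shift-invariant Borel probability measure and ∫φ dμ = sup{∫φ dν : ν a shift-invariant Borel probability measure on F^ℕ}; that is, every weak-* accumulation point of equilibrium states as β → +∞ is a zero-temperature equilibrium state (a φ-maximizing measure). -/

import Mathlib

open MeasureTheory Filter Topology
open scoped ENNReal Classical
open scoped NNReal

noncomputable section

/-- The shift map `(Tx)(n) = x(n+1)` on `F^ℕ`. -/
def shiftF {F : Type} (x : ℕ → F) : ℕ → F := fun n => x (n + 1)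

/-- The metric `d(x,y) = 2^{-min{n : x n ≠ y n}}` for `x ≠ y`, and `d(x,x) = 0`. -/
def distF {F : Type} (x y : ℕ → F) : ℝ :=
  if x = y then 0 else ((2 : ℝ) ^ sInf {n : ℕ | x n ≠ y n})⁻¹

/-- A subshift: a nonempty, closed, shift-invariant subset of `F^ℕ`. -/
def IsSubshiftF {F : Type} [TopologicalSpace F] (X : Set (ℕ → F)) : Prop :=
  X.Nonempty ∧ IsClosed X ∧ ∀ x ∈ X, shiftF x ∈ X

/-- The potential `φ_X(y) = -d(y, X) = -inf {d(y,x) : x ∈ X}`. -/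
def phiF {F : Type} (X : Set (ℕ → F)) (y : ℕ → F) : ℝ := -sInf (distF y '' X)

/-- The cylinder set of points whose first `n` symbols form the word `w`. -/
def cylinderF {F : Type} {n : ℕ} (w : Fin n → F) : Set (ℕ → F) :=
  {x | ∀ i : Fin n, x i = w i}

/-- The entropy `H_n(μ)` of the `n`-block marginal of `μ` (base-2 logarithm). -/
def HblockF {F : Type} [Fintype F] [MeasurableSpace F] (μ : Measure (ℕ → F)) (n : ℕ) : ℝ :=
  -∑ w : Fin n → F, (μ (cylinderF w)).toReal * Real.logb 2 (μ (cylinderF w)).toReal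

/-- The Kolmogorov–Sinai entropy `h(μ) = lim_n H_n(μ)/n`; since the limit exists for
shift-invariant measures, we may define it as a `limsup`. -/
def entropyF {F : Type} [Fintype F] [MeasurableSpace F] (μ : Measure (ℕ → F)) : ℝ :=
  limsup (fun n : ℕ => HblockF μ n / n) atTop

lemma measurableSet_cylinderF {F : Type} [MeasurableSpace F] [DiscreteMeasurableSpace F]
    {n : ℕ} (w : Fin n → F) : MeasurableSet (cylinderF w) := by
  have h : cylinderF w = ⋂ i : Fin n, (fun x : ℕ → F => x (i : ℕ)) ⁻¹' {w i} := by
    ext x; simp [cylinderF, Set.mem_iInter]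
  rw [h]
  exact MeasurableSet.iInter fun i => (measurable_pi_apply _) (MeasurableSet.singleton _)

lemma sum_cylinderF_toReal {F : Type} [Fintype F] [MeasurableSpace F] [DiscreteMeasurableSpace F]
    (μ : Measure (ℕ → F)) [IsProbabilityMeasure μ] (n : ℕ) :
    ∑ w : Fin n → F, (μ (cylinderF w)).toReal = 1 := by
  have hdisj : Pairwise (Function.onFun Disjoint fun w : Fin n → F => cylinderF w) := by
    intro w w' hww'
    refine Set.disjoint_left.2 fun x hx hx' => hww' ?_
    funext i
    rw [← hx i, ← hx' i]
  have hunion : (⋃ w : Fin n → F, cylinderF w) = Set.univ := by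
    refine Set.eq_univ_of_forall fun x => Set.mem_iUnion.2 ⟨fun i => x i, fun i => rfl⟩
  have hsum : ∑ w : Fin n → F, μ (cylinderF w) = 1 := by
    rw [← tsum_fintype (L := SummationFilter.unconditional _), ← measure_iUnion hdisj fun w => measurableSet_cylinderF w, hunion,
      measure_univ]
  rw [← ENNReal.toReal_sum fun w _ => (measure_lt_top μ _).ne, hsum, ENNReal.toReal_one]


lemma gibbsF {ι : Type} [Fintype ι] (p : ι → ℝ) (h0 : ∀ i, 0 ≤ p i) (h1 : ∑ i, p i = 1) :
    ∑ i, Real.negMulLog (p i) ≤ Real.log (Fintype.card ι) := by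
  have hne : Nonempty ι := by
    by_contra h
    rw [not_nonempty_iff] at h
    simp [Finset.univ_eq_empty] at h1
  set N : ℝ := (Fintype.card ι : ℝ) with hNdef
  have hN : 0 < N := by rw [hNdef]; exact_mod_cast Fintype.card_pos (α := ι)
  have hw : ∑ _i : ι, (1 / N) = 1 := by
    rw [Finset.sum_const, nsmul_eq_mul]
    field_simp
    simp [hNdef, Finset.card_univ]
  have jensen := Real.concaveOn_negMulLog.le_map_sum (t := Finset.univ)
    (w := fun _ : ι => 1 / N) (p := p) (fun i _ => by positivity) hw (fun i _ => h0 i)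
  simp only [smul_eq_mul, ← Finset.mul_sum, h1, mul_one] at jensen
  have hval : Real.negMulLog (1 / N) = (1 / N) * Real.log N := by
    rw [Real.negMulLog, one_div, Real.log_inv]; ring
  rw [hval] at jensen
  calc ∑ i, Real.negMulLog (p i) = N * ((1 / N) * ∑ i, Real.negMulLog (p i)) := by
        field_simp
    _ ≤ N * ((1 / N) * Real.log N) := by
        have := mul_le_mul_of_nonneg_left jensen hN.le
        exact this
    _ = Real.log N := by field_simp

lemma HblockF_eq {F : Type} [Fintype F] [MeasurableSpace F]
    (μ : Measure (ℕ → F)) (n : ℕ) :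
    HblockF μ n = (∑ w : Fin n → F, Real.negMulLog ((μ (cylinderF w)).toReal)) / Real.log 2 := by
  simp only [HblockF, Real.logb, Real.negMulLog, neg_mul, Finset.sum_neg_distrib,
    Finset.sum_div, neg_div]
  congr 1
  refine Finset.sum_congr rfl fun w _ => ?_
  ring

lemma HblockF_nonneg {F : Type} [Fintype F] [MeasurableSpace F] [DiscreteMeasurableSpace F]
    (μ : Measure (ℕ → F)) [IsProbabilityMeasure μ] (n : ℕ) : 0 ≤ HblockF μ n := by
  rw [HblockF_eq]
  apply div_nonneg _ (Real.log_nonneg (by norm_num))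
  refine Finset.sum_nonneg fun w _ => Real.negMulLog_nonneg ENNReal.toReal_nonneg ?_
  exact ENNReal.toReal_mono ENNReal.one_ne_top prob_le_one

lemma HblockF_le {F : Type} [Fintype F] [MeasurableSpace F] [DiscreteMeasurableSpace F]
    (μ : Measure (ℕ → F)) [IsProbabilityMeasure μ] (n : ℕ) :
    HblockF μ n ≤ n * Real.logb 2 (Fintype.card F) := by
  rw [HblockF_eq]
  have h := gibbsF (fun w : Fin n → F => (μ (cylinderF w)).toReal)
    (fun w => ENNReal.toReal_nonneg) (sum_cylinderF_toReal μ n)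
  have hcard : (Fintype.card (Fin n → F) : ℝ) = (Fintype.card F : ℝ) ^ n := by
    rw [Fintype.card_fun, Fintype.card_fin]; push_cast; ring
  rw [hcard, Real.log_pow] at h
  have h2 : (0 : ℝ) < Real.log 2 := Real.log_pos (by norm_num)
  calc (∑ w : Fin n → F, Real.negMulLog ((μ (cylinderF w)).toReal)) / Real.log 2
      ≤ (n * Real.log (Fintype.card F)) / Real.log 2 := by gcongr
    _ = n * Real.logb 2 (Fintype.card F) := by rw [Real.logb]; ring

lemma entropyF_bounds {F : Type} [Fintype F] [Nonempty F] [MeasurableSpace F]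
    [DiscreteMeasurableSpace F] (μ : Measure (ℕ → F)) [IsProbabilityMeasure μ] :
    0 ≤ entropyF μ ∧ entropyF μ ≤ Real.logb 2 (Fintype.card F) := by
  set C : ℝ := Real.logb 2 (Fintype.card F) with hC
  have hC0 : 0 ≤ C :=
    Real.logb_nonneg (by norm_num) (by exact_mod_cast Fintype.card_pos)
  have hf0 : ∀ n : ℕ, 0 ≤ HblockF μ n / n :=
    fun n => div_nonneg (HblockF_nonneg μ n) (Nat.cast_nonneg n)
  have hfC : ∀ n : ℕ, HblockF μ n / n ≤ C := by
    intro n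
    rcases Nat.eq_zero_or_pos n with h | h
    · simp [h, hC0]
    · rw [div_le_iff₀ (by exact_mod_cast h)]
      calc HblockF μ n ≤ n * C := HblockF_le μ n
        _ = C * n := by ring
  constructor
  · exact Filter.le_limsup_of_frequently_le (Filter.Frequently.of_forall hf0)
      (Filter.isBoundedUnder_of ⟨C, hfC⟩)
  · exact Filter.limsup_le_of_le
      ((Filter.isBoundedUnder_of (r := (· ≥ ·)) ⟨0, hf0⟩).isCoboundedUnder_le)
      (Filter.Eventually.of_forall hfC)

/-- A shift-invariant Borel probability measure on `F^ℕ`. -/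
def IsInvProbF {F : Type} [MeasurableSpace F] (μ : Measure (ℕ → F)) : Prop :=
  IsProbabilityMeasure μ ∧ μ.map shiftF = μ

/-- An equilibrium state for `βφ`: a shift-invariant Borel probability measure maximizing
`ν ↦ β∫φ dν + h(ν)` over all shift-invariant Borel probability measures. -/
def IsEquilibriumF {F : Type} [Fintype F] [MeasurableSpace F]
    (φ : (ℕ → F) → ℝ) (β : ℝ) (μ : Measure (ℕ → F)) : Prop :=
  IsInvProbF μ ∧ ∀ ν : Measure (ℕ → F), IsInvProbF ν →
    β * ∫ x, φ x ∂ν + entropyF ν ≤ β * ∫ x, φ x ∂μ + entropyF μ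

/-- Let `φ : F^ℕ → ℝ` be continuous, `β_i → +∞` positive reals, and
`μ_i` an equilibrium state for `β_i φ` for each `i`.  If `μ_i → μ` weak-*, then `μ` is a
shift-invariant Borel probability measure and `∫φ dμ` is maximal among shift-invariant
Borel probability measures; i.e. `μ` is a zero-temperature equilibrium state. -/
theorem stmt12 (F : Type) [Fintype F] [TopologicalSpace F] [DiscreteTopology F]
    [MeasurableSpace F] [DiscreteMeasurableSpace F]
    (φ : (ℕ → F) → ℝ) (hφ : Continuous φ)
    (β : ℕ → ℝ) (hβpos : ∀ i, 0 < β i) (hβ : Tendsto β atTop atTop)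
    (μs : ℕ → Measure (ℕ → F)) (hμs : ∀ i, IsEquilibriumF φ (β i) (μs i))
    (μ : Measure (ℕ → F))
    (hconv : ∀ f : C(ℕ → F, ℝ),
      Tendsto (fun i => ∫ x, f x ∂(μs i)) atTop (𝓝 (∫ x, f x ∂μ))) :
    IsInvProbF μ ∧
      ∫ x, φ x ∂μ =
        sSup {r | ∃ ν : Measure (ℕ → F), IsInvProbF ν ∧ r = ∫ x, φ x ∂ν} := by
  have hP : ∀ i, IsProbabilityMeasure (μs i) := fun i => (hμs i).1.1
  -- F is nonempty
  have hFne : Nonempty F := by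
    by_contra h
    rw [not_nonempty_iff] at h
    haveI : IsEmpty (ℕ → F) := ⟨fun x => h.false (x 0)⟩
    haveI := hP 0
    have h1 : (μs 0) Set.univ = 1 := measure_univ
    rw [Set.univ_eq_empty_iff.2 inferInstance, measure_empty] at h1
    exact zero_ne_one h1
  -- the shift is continuous and measurable
  have hshift_cont : Continuous (shiftF (F := F)) := continuous_pi fun n => continuous_apply _
  have hsm : Measurable (shiftF (F := F)) := hshift_cont.measurable
  -- continuous real functions are integrable
  have hint : ∀ (ν : Measure (ℕ → F)) (_ : IsProbabilityMeasure ν) (g : C(ℕ → F, ℝ)),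
      Integrable g ν := by
    intro ν hν g
    exact (BoundedContinuousFunction.mkOfCompact g).integrable ν
  -- μ is a probability measure
  have hμ1 : (fun i => ∫ x, (ContinuousMap.const (ℕ → F) (1 : ℝ)) x ∂(μs i)) = fun _ => (1 : ℝ) := by
    funext i
    haveI := hP i
    simp
  have h1 := hconv (ContinuousMap.const (ℕ → F) (1 : ℝ))
  rw [hμ1] at h1
  have h2 : ∫ x, (ContinuousMap.const (ℕ → F) (1 : ℝ)) x ∂μ = 1 :=
    tendsto_nhds_unique h1 tendsto_const_nhds
  simp only [ContinuousMap.const_apply, integral_const, smul_eq_mul, mul_one] at h2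
  haveI hprob : IsProbabilityMeasure μ := ⟨(ENNReal.toReal_eq_one_iff _).1 h2⟩
  -- the shift preserves μ
  have hinteq : ∀ g : C(ℕ → F, ℝ), ∫ x, g (shiftF x) ∂μ = ∫ x, g x ∂μ := by
    intro g
    have hgT := hconv (g.comp ⟨shiftF, hshift_cont⟩)
    have hg := hconv g
    have he : (fun i => ∫ x, (g.comp ⟨shiftF, hshift_cont⟩) x ∂(μs i))
        = fun i => ∫ x, g x ∂(μs i) := by
      funext i
      have hmapi := (hμs i).1.2
      conv_rhs => rw [← hmapi]
      rw [integral_map hsm.aemeasurable g.continuous.aestronglyMeasurable]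
      rfl
    rw [he] at hgT
    exact tendsto_nhds_unique hgT hg
  -- auxiliary: lintegral of a nonneg continuous function
  have lin : ∀ (ν : Measure (ℕ → F)), IsProbabilityMeasure ν → ∀ g : C(ℕ → F, ℝ),
      (∀ x, 0 ≤ g x) →
      ∫⁻ x, ENNReal.ofReal (g x) ∂ν = ENNReal.ofReal (∫ x, g x ∂ν) := by
    intro ν hν g hg
    exact (ofReal_integral_eq_lintegral_ofReal (hint ν hν g)
      (Filter.Eventually.of_forall hg)).symm
  have hinv : μ.map shiftF = μ := by
    haveI : IsProbabilityMeasure (μ.map shiftF) := Measure.isProbabilityMeasure_map hsm.aemeasurable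
    apply ext_of_forall_lintegral_eq_of_IsFiniteMeasure
    intro f
    obtain ⟨g, hgdef⟩ : ∃ g : C(ℕ → F, ℝ), ∀ x, g x = (f x : ℝ) :=
      ⟨⟨fun x => (f x : ℝ), NNReal.continuous_coe.comp f.continuous⟩, fun _ => rfl⟩
    have hg0 : ∀ x, 0 ≤ g x := fun x => by rw [hgdef]; exact (f x).coe_nonneg
    have hgT0 : ∀ x, 0 ≤ (g.comp ⟨shiftF, hshift_cont⟩) x := fun x => hg0 _
    have hcoe : ∀ x, ((f x : ℝ≥0) : ℝ≥0∞) = ENNReal.ofReal (g x) := fun x => by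
      rw [hgdef]; exact (ENNReal.ofReal_coe_nnreal (p := f x)).symm
    calc ∫⁻ x, (f x : ℝ≥0∞) ∂(μ.map shiftF)
        = ∫⁻ x, ENNReal.ofReal (g x) ∂(μ.map shiftF) := by simp_rw [hcoe]
      _ = ∫⁻ x, ENNReal.ofReal (g (shiftF x)) ∂μ := by
          rw [lintegral_map (by
            exact ENNReal.continuous_ofReal.comp g.continuous |>.measurable) hsm]
      _ = ∫⁻ x, ENNReal.ofReal ((g.comp ⟨shiftF, hshift_cont⟩) x) ∂μ := rfl
      _ = ENNReal.ofReal (∫ x, (g.comp ⟨shiftF, hshift_cont⟩) x ∂μ) :=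
          lin μ hprob _ hgT0
      _ = ENNReal.ofReal (∫ x, g x ∂μ) := by rw [show ∫ x, (g.comp ⟨shiftF, hshift_cont⟩) x ∂μ
            = ∫ x, g (shiftF x) ∂μ from rfl, hinteq g]
      _ = ∫⁻ x, ENNReal.ofReal (g x) ∂μ := (lin μ hprob g hg0).symm
      _ = ∫⁻ x, (f x : ℝ≥0∞) ∂μ := by simp_rw [hcoe]
  have hμInv : IsInvProbF μ := ⟨hprob, hinv⟩
  refine ⟨hμInv, ?_⟩
  -- the maximization part
  set S := {r | ∃ ν : Measure (ℕ → F), IsInvProbF ν ∧ r = ∫ x, φ x ∂ν} with hS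
  set C : ℝ := Real.logb 2 (Fintype.card F) with hC
  have hmem : ∫ x, φ x ∂μ ∈ S := ⟨μ, hμInv, rfl⟩
  have hub : ∀ r ∈ S, r ≤ ∫ x, φ x ∂μ := by
    rintro r ⟨ν, hν, rfl⟩
    haveI := hν.1
    have hν0 : 0 ≤ entropyF ν := (entropyF_bounds ν).1
    have hstep : ∀ i, ∫ x, φ x ∂ν ≤ ∫ x, φ x ∂(μs i) + C / β i := by
      intro i
      haveI := hP i
      have hiC : entropyF (μs i) ≤ C := (entropyF_bounds (μs i)).2
      have heq := (hμs i).2 ν hν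
      have hkey : β i * ∫ x, φ x ∂ν ≤ β i * ∫ x, φ x ∂(μs i) + C := by
        calc β i * ∫ x, φ x ∂ν ≤ β i * ∫ x, φ x ∂ν + entropyF ν :=
              le_add_of_nonneg_right hν0
          _ ≤ β i * ∫ x, φ x ∂(μs i) + entropyF (μs i) := heq
          _ ≤ β i * ∫ x, φ x ∂(μs i) + C := by linarith
      have hβi := hβpos i
      calc ∫ x, φ x ∂ν = (β i * ∫ x, φ x ∂ν) / β i := by field_simp
        _ ≤ (β i * ∫ x, φ x ∂(μs i) + C) / β i := by gcongr
        _ = ∫ x, φ x ∂(μs i) + C / β i := by field_simp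
    have htend : Tendsto (fun i => ∫ x, φ x ∂(μs i) + C / β i) atTop (𝓝 (∫ x, φ x ∂μ + 0)) := by
      exact (hconv ⟨φ, hφ⟩).add (Filter.Tendsto.div_atTop tendsto_const_nhds hβ)
    rw [add_zero] at htend
    exact ge_of_tendsto' htend hstep
  refine le_antisymm (le_csSup ⟨∫ x, φ x ∂μ, hub⟩ hmem) (csSup_le ⟨_, hmem⟩ hub)

end
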